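/- Assume k − 1 ≤ LR. For every 1 ≤ j ≤ k − 1 one has MC(π^(j)) ≥ MC(π^(j+1)); that is, moving the unique separate selected node one position later in the repair sequence does not increase the min-cut. -/

import Mathlib

/-- Relative location `h_π(i) = #{1 ≤ j ≤ i : π j = π i}`. -/
def relLoc (π : ℕ → ℕ) (i : ℕ) : ℕ :=
  ((Finset.Icc 1 i).filter (fun j => π j = π i)).card

/-- Intra-cluster coefficient `a_i(π) = d_I + 1 − h_π(i)` (truncated subtraction). -/
def aCoef (dI : ℕ) (π : ℕ → ℕ) (i : ℕ) : ℕ :=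
  dI + 1 - relLoc π i

/-- Cross-cluster coefficient `b_i(π) = max(0, d_C − (i − h_π(i)))` (truncated subtraction). -/
def bCoef (dC : ℕ) (π : ℕ → ℕ) (i : ℕ) : ℕ :=
  dC - (i - relLoc π i)

/-- Part incoming weight `w_i(π)`: for a separate position (`π i = 0`) it is
`(d_I + d_C + 1 − i)·β_C`, otherwise `a_i(π)·β_I + b_i(π)·β_C`. -/
noncomputable def weight (dI dC : ℕ) (βI βC : ℝ) (π : ℕ → ℕ) (i : ℕ) : ℝ :=
  if π i = 0 then ((dI + dC + 1 - i : ℕ) : ℝ) * βC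
  else (aCoef dI π i : ℝ) * βI + (bCoef dC π i : ℝ) * βC

/-- Min-cut `MC(π) = Σ_{i=1}^k min(α, w_i(π))`. -/
noncomputable def MC (k dI dC : ℕ) (βI βC α : ℝ) (π : ℕ → ℕ) : ℝ :=
  ∑ i ∈ Finset.Icc 1 k, min α (weight dI dC βI βC π i)

/-- A cluster order: a `k`-tuple with entries in `{0, 1, …, L}`. -/
def IsClusterOrder (L k : ℕ) (π : ℕ → ℕ) : Prop :=
  ∀ i, 1 ≤ i → i ≤ k → π i ≤ L

/-- A selected node distribution `(s_0, s_1, …, s_L)`: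
`R ≥ s_1 ≥ s_2 ≥ … ≥ s_L` and `s_0 + s_1 + … + s_L = k`. -/
def IsDist (L R k : ℕ) (s : ℕ → ℕ) : Prop :=
  (∀ i, 1 ≤ i → i + 1 ≤ L → s (i + 1) ≤ s i) ∧
  (∀ i, 1 ≤ i → i ≤ L → s i ≤ R) ∧
  ∑ i ∈ Finset.range (L + 1), s i = k

/-- `π ∈ Π(s)`: `π` is a cluster order with `#{1 ≤ j ≤ k : π j = c} = s c` for all `0 ≤ c ≤ L`. -/
def MemPi (L k : ℕ) (s : ℕ → ℕ) (π : ℕ → ℕ) : Prop :=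
  IsClusterOrder L k π ∧
  ∀ c, c ≤ L → ((Finset.Icc 1 k).filter (fun j => π j = c)).card = s c

/-- Vertical order of distribution `s` (possibly with separate entries, whose positions are
not constrained here):  over the cluster positions (`π i ≠ 0`) in increasing order, relative
locations are nondecreasing, with ties broken by increasing cluster index. -/
def IsVerticalOrder (L k : ℕ) (s : ℕ → ℕ) (π : ℕ → ℕ) : Prop :=
  MemPi L k s π ∧
  ∀ i j, 1 ≤ i → i < j → j ≤ k → π i ≠ 0 → π j ≠ 0 →
    relLoc π i ≤ relLoc π j ∧ (relLoc π i = relLoc π j → π i < π j)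

/-- The distribution `s*` (no separate node): `s*_0 = 0`, `s*_i = R` for `1 ≤ i ≤ ⌊k/R⌋`,
`s*_{⌊k/R⌋+1} = k − ⌊k/R⌋·R`, and `0` beyond. -/
def sStar0 (R k : ℕ) : ℕ → ℕ := fun i =>
  if i = 0 then 0
  else if i ≤ k / R then R
  else if i = k / R + 1 then k - k / R * R
  else 0

/-- The distribution with one separate node: `s_0 = 1`, `s_i = R` for `1 ≤ i ≤ ⌊(k−1)/R⌋`,
`s_{⌊(k−1)/R⌋+1} = (k−1) − ⌊(k−1)/R⌋·R`, and `0` beyond. -/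
def sStar1 (R k : ℕ) : ℕ → ℕ := fun i =>
  if i = 0 then 1
  else if i ≤ (k - 1) / R then R
  else if i = (k - 1) / R + 1 then (k - 1) - (k - 1) / R * R
  else 0

/-- `π^(j)`: the cluster order with exactly one separate entry, located at position `j`,
whose cluster entries form the vertical order of the distribution `sStar1 R k`. -/
def IsPiJ (L R k j : ℕ) (π : ℕ → ℕ) : Prop :=
  π j = 0 ∧ IsVerticalOrder L k (sStar1 R k) π


def tw (j i : ℕ) : ℕ := if i = j then j + 1 else if i = j + 1 then j else i

lemma tw_invol (j i : ℕ) : tw j (tw j i) = i := by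
  simp only [tw]; split_ifs <;> omega

lemma count_succ (π : ℕ → ℕ) (c t : ℕ) (ht : 1 ≤ t) :
    ((Finset.Icc 1 t).filter (fun x => π x = c)).card
      = ((Finset.Icc 1 (t - 1)).filter (fun x => π x = c)).card
        + (if π t = c then 1 else 0) := by
  have h : Finset.Icc 1 t = insert t (Finset.Icc 1 (t - 1)) := by
    ext x
    simp only [Finset.mem_Icc, Finset.mem_insert]
    omega
  have hnot : t ∉ (Finset.Icc 1 (t - 1)).filter (fun x => π x = c) := by
    intro hm
    have := (Finset.mem_filter.mp hm).1
    rw [Finset.mem_Icc] at this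
    omega
  rw [h, Finset.filter_insert]
  split_ifs with hc
  · rw [Finset.card_insert_of_notMem hnot]
  · simp

lemma zeros_iff {L k j : ℕ} {s π : ℕ → ℕ} (hs0 : s 0 = 1)
    (hmem : MemPi L k s π) (hj1 : 1 ≤ j) (hjk : j ≤ k) (hπj : π j = 0) :
    ∀ i, 1 ≤ i → i ≤ k → (π i = 0 ↔ i = j) := by
  have hcard := hmem.2 0 (Nat.zero_le L)
  rw [hs0] at hcard
  obtain ⟨a, hA⟩ := Finset.card_eq_one.mp hcard
  have hja : j = a := by
    have hm : j ∈ (Finset.Icc 1 k).filter (fun x => π x = 0) :=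
      Finset.mem_filter.mpr ⟨Finset.mem_Icc.mpr ⟨hj1, hjk⟩, hπj⟩
    rw [hA] at hm; simpa using hm
  intro i hi1 hik
  constructor
  · intro h0
    have hm : i ∈ (Finset.Icc 1 k).filter (fun x => π x = 0) :=
      Finset.mem_filter.mpr ⟨Finset.mem_Icc.mpr ⟨hi1, hik⟩, h0⟩
    rw [hA] at hm; simp at hm; omega
  · rintro rfl; exact hπj

lemma count_shift {k j t : ℕ} {πa πb : ℕ → ℕ}
    (hj1 : 1 ≤ j) (hjk : j + 1 ≤ k)
    (ht1 : 1 ≤ t) (htk : t ≤ k) (htj : t ≠ j)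
    (haj : πa j = 0)
    (hzb : ∀ i, 1 ≤ i → i ≤ k → (πb i = 0 ↔ i = j + 1))
    (IH : ∀ i, i < t → 1 ≤ i → i ≤ k → πa i = πb (tw j i))
    (c : ℕ) (hc : c ≠ 0) :
    ((Finset.Icc 1 (t - 1)).filter (fun x => πa x = c)).card
      = ((Finset.Icc 1 (tw j t - 1)).filter (fun x => πb x = c)).card := by
  have htw_t : (t = j + 1 ∧ tw j t = j) ∨ (t ≠ j + 1 ∧ tw j t = t) := by
    by_cases h : t = j + 1
    · exact Or.inl ⟨h, by simp [tw, htj, h]⟩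
    · exact Or.inr ⟨h, by simp [tw, htj, h]⟩
  apply Finset.card_nbij (tw j)
  · intro x hx
    rw [Finset.mem_coe, Finset.mem_filter, Finset.mem_Icc] at hx
    obtain ⟨⟨hx1, hx2⟩, hxc⟩ := hx
    have hxj : x ≠ j := by rintro rfl; rw [haj] at hxc; exact hc hxc.symm
    have htw_x : (x = j + 1 ∧ tw j x = j) ∨ (x ≠ j + 1 ∧ tw j x = x) := by
      by_cases h : x = j + 1
      · exact Or.inl ⟨h, by simp [tw, hxj, h]⟩
      · exact Or.inr ⟨h, by simp [tw, hxj, h]⟩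
    rw [Finset.mem_coe, Finset.mem_filter, Finset.mem_Icc]
    refine ⟨⟨by omega, by omega⟩, ?_⟩
    rw [← IH x (by omega) hx1 (by omega)]
    exact hxc
  · intro x _ y _ hxy
    have := congrArg (tw j) hxy
    rwa [tw_invol, tw_invol] at this
  · intro p hp
    simp only [Finset.coe_filter, Set.mem_setOf_eq, Finset.mem_Icc] at hp
    obtain ⟨⟨hp1, hp2⟩, hpc⟩ := hp
    have hpk : p ≤ k := by omega
    have hpj1 : p ≠ j + 1 := by
      intro h
      rw [(hzb p hp1 hpk).mpr h] at hpc
      exact hc hpc.symm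
    have htw_p : (p = j ∧ tw j p = j + 1) ∨ (p ≠ j ∧ tw j p = p) := by
      by_cases h : p = j
      · exact Or.inl ⟨h, by simp [tw, h]⟩
      · exact Or.inr ⟨h, by simp [tw, h, hpj1]⟩
    refine ⟨tw j p, ?_, tw_invol j p⟩
    simp only [Finset.coe_filter, Set.mem_setOf_eq, Finset.mem_Icc]
    refine ⟨⟨by omega, by omega⟩, ?_⟩
    rw [IH (tw j p) (by omega) (by omega) (by omega), tw_invol]
    exact hpc
lemma core_eq {L k : ℕ} {s πa πb : ℕ → ℕ}
    (ha : IsVerticalOrder L k s πa) (hb : IsVerticalOrder L k s πb)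
    {t u : ℕ} (ht1 : 1 ≤ t) (htk : t ≤ k) (hu1 : 1 ≤ u) (huk : u ≤ k)
    (hta : πa t ≠ 0) (hub : πb u ≠ 0)
    (hcount : ∀ c, c ≠ 0 →
      ((Finset.Icc 1 (t - 1)).filter (fun x => πa x = c)).card
        = ((Finset.Icc 1 (u - 1)).filter (fun x => πb x = c)).card) :
    πa t = πb u := by
  by_contra hne
  have hcL : πa t ≤ L := ha.1.1 t ht1 htk
  have hc'L : πb u ≤ L := hb.1.1 u hu1 huk
  have hca := hcount (πa t) hta
  have hcb := hcount (πb u) hub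
  -- relLoc values at t and u
  have hrat : relLoc πa t
      = ((Finset.Icc 1 (t - 1)).filter (fun x => πa x = πa t)).card + 1 := by
    unfold relLoc
    rw [count_succ πa (πa t) t ht1, if_pos rfl]
  have hrbu : relLoc πb u
      = ((Finset.Icc 1 (u - 1)).filter (fun x => πb x = πb u)).card + 1 := by
    unfold relLoc
    rw [count_succ πb (πb u) u hu1, if_pos rfl]
  -- counts over full [1,k]
  have hSa : ((Finset.Icc 1 k).filter (fun x => πa x = πa t)).card = s (πa t) :=
    ha.1.2 (πa t) hcL
  have hSb : ((Finset.Icc 1 k).filter (fun x => πb x = πa t)).card = s (πa t) :=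
    hb.1.2 (πa t) hcL
  have hSa' : ((Finset.Icc 1 k).filter (fun x => πa x = πb u)).card = s (πb u) :=
    ha.1.2 (πb u) hc'L
  have hSb' : ((Finset.Icc 1 k).filter (fun x => πb x = πb u)).card = s (πb u) :=
    hb.1.2 (πb u) hc'L
  -- count of (πa t) in πa over [1,t]
  have hcountt : ((Finset.Icc 1 t).filter (fun x => πa x = πa t)).card
      = ((Finset.Icc 1 (t - 1)).filter (fun x => πa x = πa t)).card + 1 := by
    rw [count_succ πa (πa t) t ht1, if_pos rfl]
  have hsubt : ((Finset.Icc 1 t).filter (fun x => πa x = πa t)).card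
      ≤ ((Finset.Icc 1 k).filter (fun x => πa x = πa t)).card :=
    Finset.card_le_card (Finset.filter_subset_filter _ (Finset.Icc_subset_Icc_right htk))
  -- count of (πa t) in πb over [1,u]
  have hcountu : ((Finset.Icc 1 u).filter (fun x => πb x = πa t)).card
      = ((Finset.Icc 1 (u - 1)).filter (fun x => πb x = πa t)).card := by
    rw [count_succ πb (πa t) u hu1, if_neg (fun h => hne h.symm)]
    omega
  -- find p > u with πb p = πa t
  have hltp : ((Finset.Icc 1 u).filter (fun x => πb x = πa t)).card
      < ((Finset.Icc 1 k).filter (fun x => πb x = πa t)).card := by omega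
  have hnss : ¬ ((Finset.Icc 1 k).filter (fun x => πb x = πa t)
      ⊆ (Finset.Icc 1 u).filter (fun x => πb x = πa t)) :=
    fun hss => absurd (Finset.card_le_card hss) (by omega)
  obtain ⟨p, hpmem, hpnot⟩ := Finset.not_subset.mp hnss
  rw [Finset.mem_filter, Finset.mem_Icc] at hpmem
  have hpu : u < p := by
    by_contra h
    exact hpnot (Finset.mem_filter.mpr ⟨Finset.mem_Icc.mpr ⟨hpmem.1.1, by omega⟩, hpmem.2⟩)
  obtain ⟨p0, hp0mem, hp0min⟩ :
      ∃ p0 ∈ (Finset.Icc 1 k).filter (fun x => u < x ∧ πb x = πa t),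
        ∀ x ∈ (Finset.Icc 1 k).filter (fun x => u < x ∧ πb x = πa t), p0 ≤ x := by
    have hTne : ((Finset.Icc 1 k).filter (fun x => u < x ∧ πb x = πa t)).Nonempty :=
      ⟨p, Finset.mem_filter.mpr ⟨Finset.mem_Icc.mpr hpmem.1, ⟨hpu, hpmem.2⟩⟩⟩
    exact ⟨_, Finset.min'_mem _ hTne, fun x hx => Finset.min'_le _ x hx⟩
  rw [Finset.mem_filter, Finset.mem_Icc] at hp0mem
  obtain ⟨⟨hp01, hp0k⟩, hp0u, hp0c⟩ := hp0mem
  -- count of (πa t) in πb over [1, p0 - 1] equals count over [1, u]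
  have hstep : (Finset.Icc 1 (p0 - 1)).filter (fun x => πb x = πa t)
      = (Finset.Icc 1 u).filter (fun x => πb x = πa t) := by
    ext x
    simp only [Finset.mem_filter, Finset.mem_Icc]
    constructor
    · rintro ⟨⟨hx1, hx2⟩, hxc⟩
      refine ⟨⟨hx1, ?_⟩, hxc⟩
      by_contra hxu
      have hxT : x ∈ (Finset.Icc 1 k).filter (fun x => u < x ∧ πb x = πa t) :=
        Finset.mem_filter.mpr ⟨Finset.mem_Icc.mpr ⟨hx1, by omega⟩, ⟨by omega, hxc⟩⟩
      have := hp0min x hxT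
      omega
    · rintro ⟨⟨hx1, hx2⟩, hxc⟩
      exact ⟨⟨hx1, by omega⟩, hxc⟩
  have hrbp : relLoc πb p0
      = ((Finset.Icc 1 (t - 1)).filter (fun x => πa x = πa t)).card + 1 := by
    unfold relLoc
    simp only [hp0c]
    rw [count_succ πb (πa t) p0 hp01, if_pos hp0c, hstep, hcountu, ← hca]
  have hv1 := hb.2 u p0 hu1 hp0u hp0k hub (by rw [hp0c]; exact hta)
  -- symmetric: find q > t with πa q = πb u
  have hcountu' : ((Finset.Icc 1 u).filter (fun x => πb x = πb u)).card
      = ((Finset.Icc 1 (u - 1)).filter (fun x => πb x = πb u)).card + 1 := by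
    rw [count_succ πb (πb u) u hu1, if_pos rfl]
  have hsubu : ((Finset.Icc 1 u).filter (fun x => πb x = πb u)).card
      ≤ ((Finset.Icc 1 k).filter (fun x => πb x = πb u)).card :=
    Finset.card_le_card (Finset.filter_subset_filter _ (Finset.Icc_subset_Icc_right huk))
  have hcountt' : ((Finset.Icc 1 t).filter (fun x => πa x = πb u)).card
      = ((Finset.Icc 1 (t - 1)).filter (fun x => πa x = πb u)).card := by
    rw [count_succ πa (πb u) t ht1, if_neg (fun h => hne h)]
    omega
  have hltq : ((Finset.Icc 1 t).filter (fun x => πa x = πb u)).card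
      < ((Finset.Icc 1 k).filter (fun x => πa x = πb u)).card := by omega
  have hnss' : ¬ ((Finset.Icc 1 k).filter (fun x => πa x = πb u)
      ⊆ (Finset.Icc 1 t).filter (fun x => πa x = πb u)) :=
    fun hss => absurd (Finset.card_le_card hss) (by omega)
  obtain ⟨q, hqmem, hqnot⟩ := Finset.not_subset.mp hnss' 
  rw [Finset.mem_filter, Finset.mem_Icc] at hqmem
  have hqt : t < q := by
    by_contra h
    exact hqnot (Finset.mem_filter.mpr ⟨Finset.mem_Icc.mpr ⟨hqmem.1.1, by omega⟩, hqmem.2⟩)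
  obtain ⟨q0, hq0mem, hq0min⟩ :
      ∃ q0 ∈ (Finset.Icc 1 k).filter (fun x => t < x ∧ πa x = πb u),
        ∀ x ∈ (Finset.Icc 1 k).filter (fun x => t < x ∧ πa x = πb u), q0 ≤ x := by
    have hTne : ((Finset.Icc 1 k).filter (fun x => t < x ∧ πa x = πb u)).Nonempty :=
      ⟨q, Finset.mem_filter.mpr ⟨Finset.mem_Icc.mpr hqmem.1, ⟨hqt, hqmem.2⟩⟩⟩
    exact ⟨_, Finset.min'_mem _ hTne, fun x hx => Finset.min'_le _ x hx⟩
  rw [Finset.mem_filter, Finset.mem_Icc] at hq0mem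
  obtain ⟨⟨hq01, hq0k⟩, hq0t, hq0c⟩ := hq0mem
  have hstep' : (Finset.Icc 1 (q0 - 1)).filter (fun x => πa x = πb u)
      = (Finset.Icc 1 t).filter (fun x => πa x = πb u) := by
    ext x
    simp only [Finset.mem_filter, Finset.mem_Icc]
    constructor
    · rintro ⟨⟨hx1, hx2⟩, hxc⟩
      refine ⟨⟨hx1, ?_⟩, hxc⟩
      by_contra hxu
      have hxT : x ∈ (Finset.Icc 1 k).filter (fun x => t < x ∧ πa x = πb u) :=
        Finset.mem_filter.mpr ⟨Finset.mem_Icc.mpr ⟨hx1, by omega⟩, ⟨by omega, hxc⟩⟩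
      have := hq0min x hxT
      omega
    · rintro ⟨⟨hx1, hx2⟩, hxc⟩
      exact ⟨⟨hx1, by omega⟩, hxc⟩
  have hraq : relLoc πa q0
      = ((Finset.Icc 1 (u - 1)).filter (fun x => πb x = πb u)).card + 1 := by
    unfold relLoc
    simp only [hq0c]
    rw [count_succ πa (πb u) q0 hq01, if_pos hq0c, hstep', hcountt', hcb]
  have hv2 := ha.2 t q0 ht1 hq0t hq0k hta (by rw [hq0c]; exact hub)
  -- contradiction
  obtain ⟨hle1, heq1⟩ := hv1
  obtain ⟨hle2, heq2⟩ := hv2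
  rw [hrbu, hrbp] at hle1 heq1
  rw [hrat, hraq] at hle2 heq2
  rw [hca, hcb] at *
  have h1 := heq1 (by omega)
  have h2 := heq2 (by omega)
  rw [hp0c] at h1
  rw [hq0c] at h2
  omega
lemma vertical_unique {L k j : ℕ} {s πa πb : ℕ → ℕ} (hs0 : s 0 = 1)
    (hj1 : 1 ≤ j) (hjk : j + 1 ≤ k)
    (haj : πa j = 0) (hbj : πb (j + 1) = 0)
    (ha : IsVerticalOrder L k s πa) (hb : IsVerticalOrder L k s πb) :
    ∀ t, 1 ≤ t → t ≤ k → πa t = πb (tw j t) := by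
  have hza := zeros_iff hs0 ha.1 hj1 (by omega) haj
  have hzb := zeros_iff hs0 hb.1 (by omega) hjk hbj
  intro t
  induction t using Nat.strong_induction_on with
  | _ t IH =>
    intro ht1 htk
    by_cases htj : t = j
    · subst htj
      have htww : tw t t = t + 1 := by simp [tw]
      rw [htww, haj, hbj]
    · have htw_t : (t = j + 1 ∧ tw j t = j) ∨ (t ≠ j + 1 ∧ tw j t = t) := by
        by_cases h : t = j + 1
        · exact Or.inl ⟨h, by simp [tw, htj, h]⟩
        · exact Or.inr ⟨h, by simp [tw, htj, h]⟩
      apply core_eq ha hb ht1 htk (u := tw j t) (by omega) (by omega)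
      · intro h0
        exact htj ((hza t ht1 htk).mp h0)
      · intro h0
        have := (hzb (tw j t) (by omega) (by omega)).mp h0
        omega
      · intro c hc
        exact count_shift hj1 hjk ht1 htk htj haj hzb
          (fun i hi hi1 hik => IH i hi hi1 hik) c hc

lemma min_swap (α c x y : ℝ) (hc : 0 ≤ c) (hxy : x ≤ y) :
    min α (y + c) + min α x ≤ min α (x + c) + min α y := by
  simp only [min_def]; split_ifs <;> linarith
lemma sStar1_le {R k c : ℕ} (hR : 1 ≤ R) (hc : 1 ≤ c) : sStar1 R k c ≤ R := by
  simp only [sStar1]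
  have h1 : (k - 1) % R < R := Nat.mod_lt _ (by omega)
  have h2 : R * ((k - 1) / R) + (k - 1) % R = k - 1 := Nat.div_add_mod _ _
  obtain ⟨q, hq⟩ : ∃ q, (k - 1) / R = q := ⟨_, rfl⟩
  obtain ⟨r, hr⟩ : ∃ r, (k - 1) % R = r := ⟨_, rfl⟩
  obtain ⟨m, hm⟩ : ∃ m, R * q = m := ⟨_, rfl⟩
  rw [hq, hr, hm] at h2
  rw [hr] at h1
  rw [hq]
  have hm' : q * R = m := by rw [← hm]; ring
  rw [hm']
  split_ifs <;> omega


set_option maxHeartbeats 1600000 in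
/-- moving the unique separate selected node one position later in the repair
sequence does not increase the min-cut: `MC(π^(j+1)) ≤ MC(π^(j))`. -/
theorem stmt6 (L R k dI dC : ℕ) (βI βC α : ℝ)
    (hL : 1 ≤ L) (hR : 2 ≤ R) (hk : 2 ≤ k)
    (hdI : dI = R - 1) (hdC : 1 ≤ dC) (hkd : k ≤ dI + dC)
    (hβ : βC ≤ βI) (hβC : 0 < βC) (hα : 0 < α)
    (hk1LR : k - 1 ≤ L * R)
    (j : ℕ) (hj1 : 1 ≤ j) (hjk : j + 1 ≤ k)
    (πa πb : ℕ → ℕ) (ha : IsPiJ L R k j πa) (hb : IsPiJ L R k (j + 1) πb) :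
    MC k dI dC βI βC α πb ≤ MC k dI dC βI βC α πa := by
  obtain ⟨haj, hva⟩ := ha
  obtain ⟨hbj, hvb⟩ := hb
  have hs0 : sStar1 R k 0 = 1 := by simp [sStar1]
  have huq := vertical_unique hs0 hj1 hjk haj hbj hva hvb
  have hza := zeros_iff hs0 hva.1 hj1 (by omega) haj
  have hzb := zeros_iff hs0 hvb.1 (by omega) hjk hbj
  have hval : ∀ i, 1 ≤ i → i ≤ k → i ≠ j → i ≠ j + 1 → πa i = πb i := by
    intro i h1 h2 h3 h4
    have h := huq i h1 h2
    rwa [show tw j i = i by simp only [tw]; rw [if_neg h3, if_neg h4]] at h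
  have hc0 : πa (j + 1) ≠ 0 := by
    intro h0
    have := (hza (j + 1) (by omega) hjk).mp h0
    omega
  have hbj0 : πb j = πa (j + 1) := by
    have h := huq (j + 1) (by omega) hjk
    rw [show tw j (j + 1) = j by simp [tw]] at h
    exact h.symm
  have hcsh : ∀ i, 1 ≤ i → i ≤ k → i ≠ j →
      ((Finset.Icc 1 (i - 1)).filter (fun x => πa x = πa i)).card
        = ((Finset.Icc 1 (tw j i - 1)).filter (fun x => πb x = πa i)).card := by
    intro i h1 h2 h3
    exact count_shift hj1 hjk h1 h2 h3 haj hzb (fun m _ hm1 hmk => huq m hm1 hmk) (πa i)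
      (fun h0 => h3 ((hza i h1 h2).mp h0))
  have hrel : ∀ i, 1 ≤ i → i ≤ k → i ≠ j → i ≠ j + 1 → relLoc πa i = relLoc πb i := by
    intro i h1 h2 h3 h4
    have hvv : πa i = πb i := hval i h1 h2 h3 h4
    have hc := hcsh i h1 h2 h3
    rw [show tw j i = i by simp only [tw]; rw [if_neg h3, if_neg h4]] at hc
    unfold relLoc
    rw [count_succ πa (πa i) i h1, if_pos rfl, count_succ πb (πb i) i h1, if_pos rfl]
    rw [← hvv]
    omega
  have hrelj : relLoc πb j = relLoc πa (j + 1) := by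
    have hc := hcsh (j + 1) (by omega) hjk (by omega)
    rw [show tw j (j + 1) = j by simp [tw]] at hc
    unfold relLoc
    rw [count_succ πb (πb j) j hj1, if_pos rfl,
      count_succ πa (πa (j + 1)) (j + 1) (by omega), if_pos rfl]
    rw [hbj0]
    omega
  have hc0L : πa (j + 1) ≤ L := hva.1.1 (j + 1) (by omega) hjk
  have hh1 : 1 ≤ relLoc πa (j + 1) := by
    have hm : (j + 1) ∈ (Finset.Icc 1 (j + 1)).filter (fun x => πa x = πa (j + 1)) :=
      Finset.mem_filter.mpr ⟨Finset.mem_Icc.mpr ⟨by omega, le_refl _⟩, rfl⟩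
    exact Finset.card_pos.mpr ⟨_, hm⟩
  have hhj : relLoc πa (j + 1) ≤ j := by
    rw [← hrelj]
    unfold relLoc
    calc ((Finset.Icc 1 j).filter (fun x => πb x = πb j)).card
        ≤ (Finset.Icc 1 j).card := Finset.card_filter_le _ _
      _ = j := by rw [Nat.card_Icc]; omega
  have hhR : relLoc πa (j + 1) ≤ R := by
    have hle : relLoc πa (j + 1)
        ≤ ((Finset.Icc 1 k).filter (fun x => πa x = πa (j + 1))).card := by
      unfold relLoc
      exact Finset.card_le_card (Finset.filter_subset_filter _ (Finset.Icc_subset_Icc_right hjk))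
    rw [hva.1.2 (πa (j + 1)) hc0L] at hle
    exact hle.trans (sStar1_le (by omega) (by omega))
  have hwaj : weight dI dC βI βC πa j = ((dI + dC + 1 - j : ℕ) : ℝ) * βC := by
    unfold weight; rw [if_pos haj]
  have hwbj1 : weight dI dC βI βC πb (j + 1) = ((dI + dC + 1 - (j + 1) : ℕ) : ℝ) * βC := by
    unfold weight; rw [if_pos hbj]
  have hwbj : weight dI dC βI βC πb j
      = ((dI + 1 - relLoc πa (j + 1) : ℕ) : ℝ) * βI
        + ((dC - (j - relLoc πa (j + 1)) : ℕ) : ℝ) * βC := by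
    unfold weight aCoef bCoef
    rw [if_neg (by rw [hbj0]; exact hc0), hrelj]
  have hwaj1 : weight dI dC βI βC πa (j + 1)
      = ((dI + 1 - relLoc πa (j + 1) : ℕ) : ℝ) * βI
        + ((dC - (j + 1 - relLoc πa (j + 1)) : ℕ) : ℝ) * βC := by
    unfold weight aCoef bCoef
    rw [if_neg hc0]
  have hjmem : j ∈ Finset.Icc 1 k := Finset.mem_Icc.mpr ⟨hj1, by omega⟩
  have hj1mem : j + 1 ∈ (Finset.Icc 1 k).erase j :=
    Finset.mem_erase.mpr ⟨by omega, Finset.mem_Icc.mpr ⟨by omega, hjk⟩⟩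
  have hexp : ∀ π : ℕ → ℕ, MC k dI dC βI βC α π
      = min α (weight dI dC βI βC π j) + (min α (weight dI dC βI βC π (j + 1))
        + ∑ i ∈ ((Finset.Icc 1 k).erase j).erase (j + 1), min α (weight dI dC βI βC π i)) := by
    intro π
    unfold MC
    rw [← Finset.add_sum_erase _ _ hjmem, ← Finset.add_sum_erase _ _ hj1mem]
  have hrest : ∑ i ∈ ((Finset.Icc 1 k).erase j).erase (j + 1), min α (weight dI dC βI βC πb i)
      = ∑ i ∈ ((Finset.Icc 1 k).erase j).erase (j + 1), min α (weight dI dC βI βC πa i) := by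
    apply Finset.sum_congr rfl
    intro i hi
    obtain ⟨hi4, hi5⟩ := Finset.mem_erase.mp hi
    obtain ⟨hi3, hi2⟩ := Finset.mem_erase.mp hi5
    rw [Finset.mem_Icc] at hi2
    have hvv := hval i hi2.1 hi2.2 hi3 hi4
    have hrr := hrel i hi2.1 hi2.2 hi3 hi4
    unfold weight aCoef bCoef
    rw [← hvv, ← hrr]
  rw [hexp πa, hexp πb, hrest, hwaj, hwbj1, hwbj, hwaj1]
  have e1 : dI + dC + 1 - j = (dI + dC - j) + 1 := by omega
  have e2 : dI + dC + 1 - (j + 1) = dI + dC - j := by omega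
  rw [e1, e2]
  set h := relLoc πa (j + 1) with hh
  set m := dI + dC - j with hm
  set a := dI + 1 - h with haa
  set b := dC - (j + 1 - h) with hbb
  set b' := dC - (j - h) with hbb'
  have hab : m ≤ a + b := by omega
  have hbb1 : b' ≤ b + 1 := by omega
  have hxy : (m : ℝ) * βC ≤ (a : ℝ) * βI + (b : ℝ) * βC := by
    have h1 : (m : ℝ) ≤ (a : ℝ) + (b : ℝ) := by exact_mod_cast hab
    have h2 : (a : ℝ) * βC ≤ (a : ℝ) * βI := by
      exact mul_le_mul_of_nonneg_left hβ (Nat.cast_nonneg a)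
    have h3 := mul_le_mul_of_nonneg_right h1 hβC.le
    nlinarith
  have hy' : (a : ℝ) * βI + (b' : ℝ) * βC ≤ ((a : ℝ) * βI + (b : ℝ) * βC) + βC := by
    have h1 : (b' : ℝ) ≤ (b : ℝ) + 1 := by exact_mod_cast hbb1
    have h3 := mul_le_mul_of_nonneg_right h1 hβC.le
    nlinarith
  have hsw := min_swap α βC ((m : ℝ) * βC) ((a : ℝ) * βI + (b : ℝ) * βC) hβC.le hxy
  have hmono : min α ((a : ℝ) * βI + (b' : ℝ) * βC)
      ≤ min α (((a : ℝ) * βI + (b : ℝ) * βC) + βC) := min_le_min (le_refl α) hy'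
  have hc1 : ((m + 1 : ℕ) : ℝ) * βC = (m : ℝ) * βC + βC := by push_cast; ring
  rw [hc1]
  linarith
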